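/- Let A and B be vertex types each containing at least two elements, and let Γ be the disjoint union of the complete graph on A and the complete graph on B (so two distinct vertices of Γ are adjacent iff they both lie in A or both lie in B). Then Γ is rigid, but the core CΓ of Γ is not rigid (CΓ is the edgeless graph on two vertices). -/

import Mathlib

/-- `linkSet G S` is the link of a set `S` of vertices in the simple graph `G`:
the set of vertices adjacent to every vertex of `S`.  (For `S = ∅` this is all of `V`.) -/
def linkSet {V : Type*} (G : SimpleGraph V) (S : Set V) : Set V :=
  {w | ∀ v ∈ S, G.Adj v w}

/-- A simple graph is *rigid* if `Link(Link(v)) = {v}` for every vertex `v`. -/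
def IsRigid {V : Type*} (G : SimpleGraph V) : Prop :=
  ∀ v : V, linkSet G (linkSet G {v}) = {v}

/-- The *star* of a vertex `v` in a simple graph `G`: `{v} ∪ Link(v)`. -/
def starSet {V : Type*} (G : SimpleGraph V) (v : V) : Set V :=
  insert v (G.neighborSet v)

/-- The *core equivalence* on the vertices of a simple graph: `v ≈ w` iff
`Star(v) = Star(w)`. -/
def coreSetoid {V : Type*} (G : SimpleGraph V) : Setoid V where
  r v w := starSet G v = starSet G w
  iseqv := ⟨fun _ => rfl, Eq.symm, Eq.trans⟩

/-- The *core* of a simple graph `G`: the simple graph whose vertices are the core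
equivalence classes of `G`, with two distinct classes adjacent iff some (equivalently,
any) representatives are adjacent in `G`. -/
def coreGraph {V : Type*} (G : SimpleGraph V) :
    SimpleGraph (Quotient (coreSetoid G)) where
  Adj c d := c ≠ d ∧ ∃ v w : V,
    Quotient.mk (coreSetoid G) v = c ∧ Quotient.mk (coreSetoid G) w = d ∧ G.Adj v w
  symm := by
    refine ⟨?_⟩
    rintro c d ⟨hne, v, w, hv, hw, h⟩
    exact ⟨hne.symm, w, v, hw, hv, h.symm⟩
  loopless := ⟨fun c h => h.1 rfl⟩

/-- The disjoint union of the complete graph on `A` and the complete graph on `B`: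
two distinct vertices of `A ⊕ B` are adjacent iff they both lie in `A` or both lie
in `B`. -/
def twoCliques (A B : Type*) : SimpleGraph (A ⊕ B) where
  Adj x y := x ≠ y ∧ x.isLeft = y.isLeft
  symm := by
    refine ⟨?_⟩
    rintro x y ⟨h1, h2⟩
    exact ⟨h1.symm, h2.symm⟩
  loopless := ⟨fun x h => h.1 rfl⟩

/-- **A rigid graph whose core is not rigid.**  If `A` and `B` each have at least two
elements, then the disjoint union of the complete graphs on `A` and on `B` is rigid,
but its core is not rigid. -/
theorem isRigid_twoCliques_not_isRigid_coreGraph {A B : Type*}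
    (hA : ∃ a b : A, a ≠ b) (hB : ∃ a b : B, a ≠ b) :
    IsRigid (twoCliques A B) ∧ ¬ IsRigid (coreGraph (twoCliques A B)) := by
  obtain ⟨a1, a2, hA'⟩ := hA
  obtain ⟨b1, b2, hB'⟩ := hB
  set G := twoCliques A B with hG
  have hstar : ∀ x : A ⊕ B, starSet G x = {y | y.isLeft = x.isLeft} := by
    intro x
    ext y
    simp only [starSet, Set.mem_insert_iff, SimpleGraph.mem_neighborSet, hG, twoCliques,
      Set.mem_setOf_eq]
    constructor
    · rintro (rfl | ⟨_, h⟩)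
      · rfl
      · exact h.symm
    · intro h
      by_cases hxy : y = x
      · exact Or.inl hxy
      · exact Or.inr ⟨fun e => hxy e.symm, h.symm⟩
  constructor
  · intro v
    ext w
    simp only [linkSet, Set.mem_setOf_eq, Set.mem_singleton_iff]
    constructor
    · intro h
      by_contra hw
      by_cases hside : v.isLeft = w.isLeft
      · exact (twoCliques A B).loopless.irrefl w
          (h w (fun x hx => by
            subst hx
            exact ⟨fun e => hw e.symm, hside⟩))
      · obtain ⟨u, hu1, hu2⟩ : ∃ u : A ⊕ B, u ≠ v ∧ v.isLeft = u.isLeft := by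
          cases v with
          | inl a =>
            rcases ne_or_eq a1 a with h1 | h1
            · exact ⟨Sum.inl a1, by simp [h1], rfl⟩
            · exact ⟨Sum.inl a2, by simp [h1 ▸ hA'.symm, Ne.symm], rfl⟩
          | inr b =>
            rcases ne_or_eq b1 b with h1 | h1
            · exact ⟨Sum.inr b1, by simp [h1], rfl⟩
            · exact ⟨Sum.inr b2, by simp [h1 ▸ hB'.symm, Ne.symm], rfl⟩
        have hu : u ∈ linkSet (twoCliques A B) {v} := by
          intro x hx
          subst hx
          exact (show _ ≠ _ ∧ _ = _ from ⟨hu1.symm, hu2⟩)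
        have := (show u ≠ w ∧ u.isLeft = w.isLeft from h u hu).2
        exact hside (hu2.trans this)
    · rintro rfl
      intro u hu
      have := hu w (Set.mem_singleton w)
      exact this.symm
  · intro hrig
    have hnoadj : ∀ c d, ¬ (coreGraph G).Adj c d := by
      rintro c d hcd'
      obtain ⟨hcd, v, w, rfl, rfl, hadj⟩ : c ≠ d ∧ ∃ v w : A ⊕ B, Quotient.mk (coreSetoid G) v = c ∧
          Quotient.mk (coreSetoid G) w = d ∧ G.Adj v w := hcd'
      exact hcd (Quotient.sound (by
        show starSet G v = starSet G w
        rw [hstar, hstar, (show v ≠ w ∧ v.isLeft = w.isLeft from hadj).2]))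
    have hne : (Quotient.mk (coreSetoid G) (Sum.inl a1)) ≠
        Quotient.mk (coreSetoid G) (Sum.inr b1) := by
      intro h
      have h2 : starSet G (Sum.inl a1) = starSet G (Sum.inr b1) := Quotient.exact h
      rw [hstar, hstar] at h2
      have : (Sum.inl a1 : A ⊕ B) ∈ {y : A ⊕ B | y.isLeft = (Sum.inl a1 : A ⊕ B).isLeft} := rfl
      rw [h2] at this
      simp at this
    have h1 := hrig (Quotient.mk (coreSetoid G) (Sum.inl a1))
    have hmem : Quotient.mk (coreSetoid G) (Sum.inr b1) ∈
        linkSet (coreGraph G) (linkSet (coreGraph G) {Quotient.mk (coreSetoid G) (Sum.inl a1)}) := by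
      intro u hu
      exact absurd (hu _ (Set.mem_singleton _)) (hnoadj _ _)
    rw [h1] at hmem
    exact hne hmem.symm
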